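/- Let a group Γ act by automorphisms α on a countable abelian group Σ in which every nontrivial element has order 2, and let G = Σ ⋊ Γ. Suppose Ω is a normalized 𝕋-valued 2-cocycle on G of finite type, i.e., there exist d ≥ 1 and a map π : G → U(d) into the group of unitary d×d complex matrices with π(g)π(h) = Ω(g,h) π(gh) for all g,h ∈ G. Then there exist a finite index subgroup Σ₀ ≤ Σ, a finite index subgroup Γ₀ ≤ Γ with α_g(Σ₀) = Σ₀ for all g ∈ Γ₀, and a finite-type 𝕋-valued 2-cocycle ω₀ on Γ₀, such that the restriction of Ω to the subgroup G₀ = Σ₀ ⋊ Γ₀ of G is cohomologous to the cocycle ((a,g),(b,h)) ↦ ω₀(g,h). -/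

import Mathlib

/-- A normalized `𝕋`-valued 2-cocycle on a group `G`. -/
def IsMulCocycle {G : Type*} [Group G] (Ω : G → G → Circle) : Prop :=
  (∀ g h k, Ω g h * Ω (g * h) k = Ω g (h * k) * Ω h k) ∧
  (∀ g, Ω g 1 = 1) ∧ (∀ g, Ω 1 g = 1)

/-- A `𝕋`-valued 2-cocycle on `G` is of finite type if it comes from a finite dimensional
projective unitary representation. -/
def IsFiniteType {G : Type*} [Group G] (Ω : G → G → Circle) : Prop :=
  ∃ (d : ℕ) (_ : 0 < d) (π : G → Matrix.unitaryGroup (Fin d) ℂ),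
    ∀ g h : G, (π g : Matrix (Fin d) (Fin d) ℂ) * (π h : Matrix (Fin d) (Fin d) ℂ) =
      (Ω g h : ℂ) • (π (g * h) : Matrix (Fin d) (Fin d) ℂ)

namespace FTCaux
section MatrixGeneric
set_option linter.unusedSectionVars false


variable {G : Type*} [Group G] {d : ℕ} {Ω : G → G → Circle}
  {π : G → Matrix.unitaryGroup (Fin d) ℂ}

/-- Abbreviation for the defining relation. -/
def Hpi (Ω : G → G → Circle) (π : G → Matrix.unitaryGroup (Fin d) ℂ) : Prop :=
  ∀ g h : G, (π g : Matrix (Fin d) (Fin d) ℂ) * (π h : Matrix (Fin d) (Fin d) ℂ) =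
      (Ω g h : ℂ) • (π (g * h) : Matrix (Fin d) (Fin d) ℂ)

lemma pi_one (hΩ : IsMulCocycle Ω) (hπ : Hpi Ω π) :
    ((π 1 : Matrix (Fin d) (Fin d) ℂ)) = 1 := by
  have h := hπ 1 1
  rw [mul_one, hΩ.2.1 1, Circle.coe_one, one_smul] at h
  have hs : star ((π 1 : Matrix (Fin d) (Fin d) ℂ)) * (π 1 : Matrix (Fin d) (Fin d) ℂ) = 1 :=
    Unitary.star_mul_self_of_mem (π 1).2
  calc ((π 1 : Matrix (Fin d) (Fin d) ℂ))
      = (star ((π 1 : Matrix (Fin d) (Fin d) ℂ)) * (π 1 : Matrix (Fin d) (Fin d) ℂ)) *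
        (π 1 : Matrix (Fin d) (Fin d) ℂ) := by rw [hs, one_mul]
    _ = star ((π 1 : Matrix (Fin d) (Fin d) ℂ)) *
        ((π 1 : Matrix (Fin d) (Fin d) ℂ) * (π 1 : Matrix (Fin d) (Fin d) ℂ)) := by
        rw [mul_assoc]
    _ = 1 := by rw [h, hs]

lemma pi_ne_zero (hd : 0 < d) (x : G) : ((π x : Matrix (Fin d) (Fin d) ℂ)) ≠ 0 := by
  intro h
  have hs : star ((π x : Matrix (Fin d) (Fin d) ℂ)) * (π x : Matrix (Fin d) (Fin d) ℂ) = 1 :=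
    Unitary.star_mul_self_of_mem (π x).2
  rw [h, mul_zero] at hs
  have := congrFun (congrFun hs ⟨0, hd⟩) ⟨0, hd⟩
  simp [Matrix.one_apply] at this

lemma smul_cancel (hd : 0 < d) {s t : ℂ} {x : G}
    (h : s • ((π x : Matrix (Fin d) (Fin d) ℂ)) = t • ((π x : Matrix (Fin d) (Fin d) ℂ))) :
    s = t := by
  by_contra hst
  have h2 : (s - t) • ((π x : Matrix (Fin d) (Fin d) ℂ)) = 0 := by
    rw [sub_smul, h, sub_self]
  rcases smul_eq_zero.mp h2 with h3 | h3
  · exact hst (sub_eq_zero.mp h3)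
  · exact pi_ne_zero hd x h3

lemma mul_star_self (x : G) :
    (π x : Matrix (Fin d) (Fin d) ℂ) * star ((π x : Matrix (Fin d) (Fin d) ℂ)) = 1 :=
  Unitary.mul_star_self_of_mem (π x).2

lemma star_mul_self' (x : G) :
    star ((π x : Matrix (Fin d) (Fin d) ℂ)) * (π x : Matrix (Fin d) (Fin d) ℂ) = 1 :=
  Unitary.star_mul_self_of_mem (π x).2


end MatrixGeneric

/-- complex version of a Circle identity -/
lemma circ_c {x y : Circle} (h : x = y) : (x : ℂ) = y := congrArg _ h

variable {G : Type*} [Group G]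

/-- The twisted central extension `𝕋 ×_Ω G`. -/
@[ext] structure TwE (Ω : G → G → Circle) (hΩ : IsMulCocycle Ω) where
  z : Circle
  g : G

namespace TwE
section Generic
variable {Ω : G → G → Circle} {hΩ : IsMulCocycle Ω}

noncomputable instance : Mul (TwE Ω hΩ) := ⟨fun x y => ⟨x.z * y.z * Ω x.g y.g, x.g * y.g⟩⟩
noncomputable instance : One (TwE Ω hΩ) := ⟨⟨1, 1⟩⟩
noncomputable instance : Inv (TwE Ω hΩ) := ⟨fun x => ⟨x.z⁻¹ * (Ω x.g⁻¹ x.g)⁻¹, x.g⁻¹⟩⟩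

lemma mul_def (x y : TwE Ω hΩ) : x * y = ⟨x.z * y.z * Ω x.g y.g, x.g * y.g⟩ := rfl
lemma one_def : (1 : TwE Ω hΩ) = ⟨1, 1⟩ := rfl
lemma z_mul (x y : TwE Ω hΩ) : (x * y).z = x.z * y.z * Ω x.g y.g := rfl
lemma g_mul (x y : TwE Ω hΩ) : (x * y).g = x.g * y.g := rfl

noncomputable instance : Group (TwE Ω hΩ) :=
  Group.ofLeftAxioms
    (fun x y z => by
      have h := circ_c (hΩ.1 x.g y.g z.g)
      push_cast at h
      ext
      · simp only [z_mul, g_mul]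
        push_cast
        linear_combination ((x.z : ℂ) * y.z * z.z) * h
      · exact mul_assoc _ _ _)
    (fun x => by
      ext
      · simp only [z_mul, g_mul, one_def, hΩ.2.2, one_mul, mul_one]
      · exact one_mul _
      )
    (fun x => by
      ext
      · show ((x⁻¹ * x).z : ℂ) = ((1 : TwE Ω hΩ).z : ℂ)
        simp only [z_mul, one_def]
        show ((x.z⁻¹ * (Ω x.g⁻¹ x.g)⁻¹ : Circle) * x.z * Ω x.g⁻¹ x.g : ℂ) = ((1 : Circle) : ℂ)
        push_cast
        field_simp
      · exact inv_mul_cancel _)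

variable (hΩ) in
/-- The central copy of the circle. -/
noncomputable def iota (z : Circle) : TwE Ω hΩ := ⟨z, 1⟩

variable (hΩ) in
/-- The canonical section. -/
noncomputable def tau (x : G) : TwE Ω hΩ := ⟨1, x⟩

lemma iota_injective : Function.Injective (iota hΩ) := fun a b h => congrArg TwE.z h

lemma iota_mul (z w : Circle) : iota hΩ (z * w) = iota hΩ z * iota hΩ w := by
  ext
  · simp [iota, z_mul, hΩ.2.1]
  · simp [iota, g_mul]

lemma iota_central (z : Circle) (x : TwE Ω hΩ) : iota hΩ z * x = x * iota hΩ z := by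
  ext
  · simp [iota, z_mul, hΩ.2.1, hΩ.2.2]
    push_cast
    ring
  · simp [iota, g_mul]

lemma tau_mul (x y : G) : tau hΩ x * tau hΩ y = iota hΩ (Ω x y) * tau hΩ (x * y) := by
  ext
  · simp [iota, tau, z_mul, hΩ.2.1, hΩ.2.2]
  · simp [iota, tau, g_mul]

lemma iota_one : iota hΩ 1 = 1 := rfl


lemma pull (z : Circle) (x y : TwE Ω hΩ) :
    x * (iota hΩ z * y) = iota hΩ z * (x * y) := by
  rw [← mul_assoc, ← iota_central, mul_assoc]

lemma iota_inv_mul (z : Circle) (y : TwE Ω hΩ) :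
    iota hΩ z⁻¹ * (iota hΩ z * y) = y := by
  rw [← mul_assoc, ← iota_mul, inv_mul_cancel, iota_one, one_mul]

lemma iota_cancel {z w : Circle} {x : TwE Ω hΩ}
    (h : iota hΩ z * x = iota hΩ w * x) : z = w :=
  iota_injective (mul_right_cancel h)

end Generic

section Semidirect

open SemidirectProduct TwE

variable {Γ Sg : Type*} [Group Γ] [CommGroup Sg] {α : Γ →* MulAut Sg}
  {Ω : Sg ⋊[α] Γ → Sg ⋊[α] Γ → Circle} {hΩ : IsMulCocycle Ω}

variable (Ω) in
/-- The antisymmetrization of `Ω` on `Σ`. -/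
noncomputable def chiR (a b : Sg) : Circle := Ω (inl b) (inl a) * (Ω (inl a) (inl b))⁻¹

variable (Ω) in
/-- The scalar relating `σ(g) p(b) σ(g)⁻¹` and `p(α_g b)`. -/
noncomputable def cR (g : Γ) (b : Sg) : Circle :=
  Ω (inr g) (inl b) * (Ω (inl (α g b)) (inr g))⁻¹

lemma inl_comm (a b : Sg) : (inl b : Sg ⋊[α] Γ) * inl a = inl a * inl b := by
  rw [← map_mul, ← map_mul, mul_comm]

lemma inr_mul_inl (g : Γ) (b : Sg) :
    (inr g : Sg ⋊[α] Γ) * inl b = inl (α g b) * inr g := by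
  rw [inl_aut]; simp [inv_mul_cancel_right]

lemma sd_mul (a b : Sg) (g h : Γ) :
    ((inl a * inr g : Sg ⋊[α] Γ)) * (inl b * inr h) = inl (a * α g b) * inr (g * h) := by
  ext <;> simp [mul_left, mul_right]

variable (hΩ) in
lemma tau_comm (a b : Sg) :
    tau hΩ (inl b : Sg ⋊[α] Γ) * tau hΩ (inl a)
      = iota hΩ (chiR Ω a b) * (tau hΩ (inl a) * tau hΩ (inl b)) := by
  apply TwE.ext
  · apply Circle.coe_injective
    simp only [z_mul, g_mul, iota, tau, hΩ.2.1, hΩ.2.2, chiR, Circle.coe_mul,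
      Circle.coe_inv, Circle.coe_one]
    field_simp
  · simp only [g_mul, iota, tau, one_mul]
    exact inl_comm a b

variable (hΩ) in
lemma tau_conj (g : Γ) (b : Sg) :
    tau hΩ (inr g : Sg ⋊[α] Γ) * tau hΩ (inl b)
      = iota hΩ (cR Ω g b) * (tau hΩ (inl (α g b)) * tau hΩ (inr g)) := by
  apply TwE.ext
  · apply Circle.coe_injective
    simp only [z_mul, g_mul, iota, tau, hΩ.2.1, hΩ.2.2, cR, Circle.coe_mul,
      Circle.coe_inv, Circle.coe_one]
    field_simp
  · simp only [g_mul, iota, tau, one_mul]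
    exact inr_mul_inl g b

lemma circle_eq_of_c {x y : Circle} (h : (x : ℂ) = y) : x = y := Circle.coe_injective h

include hΩ in
lemma chiR_mul (a₁ a₂ b : Sg) :
    chiR Ω (a₁ * a₂) b = chiR Ω a₁ b * chiR Ω a₂ b := by
  have h12 : tau hΩ (inl a₁ : Sg ⋊[α] Γ) * tau hΩ (inl a₂)
      = iota hΩ (Ω (inl a₁) (inl a₂)) * tau hΩ (inl (a₁ * a₂)) := by
    rw [tau_mul, ← map_mul]
  have E1 : tau hΩ (inl b : Sg ⋊[α] Γ) * (tau hΩ (inl a₁) * tau hΩ (inl a₂))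
      = iota hΩ (Ω (inl a₁) (inl a₂) * chiR Ω (a₁ * a₂) b)
          * (tau hΩ (inl (a₁ * a₂)) * tau hΩ (inl b)) := by
    rw [h12, pull, tau_comm hΩ (a₁ * a₂) b, ← mul_assoc, ← iota_mul]
  have E2 : tau hΩ (inl b : Sg ⋊[α] Γ) * (tau hΩ (inl a₁) * tau hΩ (inl a₂))
      = iota hΩ (chiR Ω a₁ b * (chiR Ω a₂ b * Ω (inl a₁) (inl a₂)))
          * (tau hΩ (inl (a₁ * a₂)) * tau hΩ (inl b)) := by
    calc tau hΩ (inl b : Sg ⋊[α] Γ) * (tau hΩ (inl a₁) * tau hΩ (inl a₂))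
        = (tau hΩ (inl b) * tau hΩ (inl a₁)) * tau hΩ (inl a₂) := (mul_assoc _ _ _).symm
      _ = (iota hΩ (chiR Ω a₁ b) * (tau hΩ (inl a₁) * tau hΩ (inl b))) * tau hΩ (inl a₂) := by
          rw [tau_comm hΩ a₁ b]
      _ = iota hΩ (chiR Ω a₁ b) * (tau hΩ (inl a₁) * (tau hΩ (inl b) * tau hΩ (inl a₂))) := by
          rw [mul_assoc, mul_assoc]
      _ = iota hΩ (chiR Ω a₁ b) * (tau hΩ (inl a₁) *
            (iota hΩ (chiR Ω a₂ b) * (tau hΩ (inl a₂) * tau hΩ (inl b)))) := by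
          rw [tau_comm hΩ a₂ b]
      _ = iota hΩ (chiR Ω a₁ b) * (iota hΩ (chiR Ω a₂ b) *
            (tau hΩ (inl a₁) * (tau hΩ (inl a₂) * tau hΩ (inl b)))) := by rw [pull]
      _ = iota hΩ (chiR Ω a₁ b) * (iota hΩ (chiR Ω a₂ b) *
            ((tau hΩ (inl a₁) * tau hΩ (inl a₂)) * tau hΩ (inl b))) := by rw [mul_assoc]
      _ = iota hΩ (chiR Ω a₁ b) * (iota hΩ (chiR Ω a₂ b) *
            ((iota hΩ (Ω (inl a₁) (inl a₂)) * tau hΩ (inl (a₁ * a₂))) * tau hΩ (inl b))) := by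
          rw [h12]
      _ = iota hΩ (chiR Ω a₁ b * (chiR Ω a₂ b * Ω (inl a₁) (inl a₂)))
            * (tau hΩ (inl (a₁ * a₂)) * tau hΩ (inl b)) := by
          simp only [iota_mul, mul_assoc]
  have key : Ω (inl a₁) (inl a₂) * chiR Ω (a₁ * a₂) b
      = chiR Ω a₁ b * (chiR Ω a₂ b * Ω (inl a₁) (inl a₂)) :=
    iota_cancel (E1.symm.trans E2)
  apply circle_eq_of_c
  have key' := circ_c key
  push_cast at key'
  have hne : ((Ω (inl a₁) (inl a₂) : ℂ)) ≠ 0 := Circle.coe_ne_zero _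
  push_cast
  apply mul_left_cancel₀ hne
  linear_combination key'

include hΩ in
lemma chiR_invariant (g : Γ) (a b : Sg) :
    chiR Ω (α g a) (α g b) = chiR Ω a b := by
  have E1 : tau hΩ (inr g : Sg ⋊[α] Γ) * (tau hΩ (inl b) * tau hΩ (inl a))
      = iota hΩ (chiR Ω a b * (cR Ω g a * cR Ω g b)) *
          (tau hΩ (inl (α g a)) * (tau hΩ (inl (α g b)) * tau hΩ (inr g))) := by
    calc tau hΩ (inr g : Sg ⋊[α] Γ) * (tau hΩ (inl b) * tau hΩ (inl a))
        = tau hΩ (inr g) * (iota hΩ (chiR Ω a b) * (tau hΩ (inl a) * tau hΩ (inl b))) := by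
          rw [tau_comm hΩ a b]
      _ = iota hΩ (chiR Ω a b) * (tau hΩ (inr g) * (tau hΩ (inl a) * tau hΩ (inl b))) := by
          rw [pull]
      _ = iota hΩ (chiR Ω a b) * ((tau hΩ (inr g) * tau hΩ (inl a)) * tau hΩ (inl b)) := by
          rw [mul_assoc]
      _ = iota hΩ (chiR Ω a b) * ((iota hΩ (cR Ω g a) * (tau hΩ (inl (α g a)) * tau hΩ (inr g)))
            * tau hΩ (inl b)) := by rw [tau_conj hΩ g a]
      _ = iota hΩ (chiR Ω a b) * (iota hΩ (cR Ω g a) * (tau hΩ (inl (α g a)) *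
            (tau hΩ (inr g) * tau hΩ (inl b)))) := by rw [mul_assoc, mul_assoc]
      _ = iota hΩ (chiR Ω a b) * (iota hΩ (cR Ω g a) * (tau hΩ (inl (α g a)) *
            (iota hΩ (cR Ω g b) * (tau hΩ (inl (α g b)) * tau hΩ (inr g))))) := by
          rw [tau_conj hΩ g b]
      _ = iota hΩ (chiR Ω a b) * (iota hΩ (cR Ω g a) * (iota hΩ (cR Ω g b) *
            (tau hΩ (inl (α g a)) * (tau hΩ (inl (α g b)) * tau hΩ (inr g))))) := by
          rw [pull (cR Ω g b)]
      _ = iota hΩ (chiR Ω a b * (cR Ω g a * cR Ω g b)) *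
            (tau hΩ (inl (α g a)) * (tau hΩ (inl (α g b)) * tau hΩ (inr g))) := by
          simp only [iota_mul, mul_assoc]
  have E2 : tau hΩ (inr g : Sg ⋊[α] Γ) * (tau hΩ (inl b) * tau hΩ (inl a))
      = iota hΩ (cR Ω g b * (cR Ω g a * chiR Ω (α g a) (α g b))) *
          (tau hΩ (inl (α g a)) * (tau hΩ (inl (α g b)) * tau hΩ (inr g))) := by
    calc tau hΩ (inr g : Sg ⋊[α] Γ) * (tau hΩ (inl b) * tau hΩ (inl a))
        = (tau hΩ (inr g) * tau hΩ (inl b)) * tau hΩ (inl a) := (mul_assoc _ _ _).symm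
      _ = (iota hΩ (cR Ω g b) * (tau hΩ (inl (α g b)) * tau hΩ (inr g))) * tau hΩ (inl a) := by
          rw [tau_conj hΩ g b]
      _ = iota hΩ (cR Ω g b) * (tau hΩ (inl (α g b)) * (tau hΩ (inr g) * tau hΩ (inl a))) := by
          rw [mul_assoc, mul_assoc]
      _ = iota hΩ (cR Ω g b) * (tau hΩ (inl (α g b)) *
            (iota hΩ (cR Ω g a) * (tau hΩ (inl (α g a)) * tau hΩ (inr g)))) := by
          rw [tau_conj hΩ g a]
      _ = iota hΩ (cR Ω g b) * (iota hΩ (cR Ω g a) * (tau hΩ (inl (α g b)) *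
            (tau hΩ (inl (α g a)) * tau hΩ (inr g)))) := by rw [pull]
      _ = iota hΩ (cR Ω g b) * (iota hΩ (cR Ω g a) * ((tau hΩ (inl (α g b)) *
            tau hΩ (inl (α g a))) * tau hΩ (inr g))) := by rw [mul_assoc]
      _ = iota hΩ (cR Ω g b) * (iota hΩ (cR Ω g a) * ((iota hΩ (chiR Ω (α g a) (α g b)) *
            (tau hΩ (inl (α g a)) * tau hΩ (inl (α g b)))) * tau hΩ (inr g))) := by
          rw [tau_comm hΩ (α g a) (α g b)]
      _ = iota hΩ (cR Ω g b * (cR Ω g a * chiR Ω (α g a) (α g b))) *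
            (tau hΩ (inl (α g a)) * (tau hΩ (inl (α g b)) * tau hΩ (inr g))) := by
          simp only [iota_mul, mul_assoc]
  have key := iota_cancel (E1.symm.trans E2)
  apply circle_eq_of_c
  have key' := circ_c key
  push_cast at key'
  have h1 : ((cR Ω g a : ℂ)) ≠ 0 := Circle.coe_ne_zero _
  have h2 : ((cR Ω g b : ℂ)) ≠ 0 := Circle.coe_ne_zero _
  have h3 : ((cR Ω g b : ℂ)) * ((cR Ω g a : ℂ)) ≠ 0 := mul_ne_zero h2 h1
  apply mul_left_cancel₀ h3
  linear_combination -key'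

include hΩ in
lemma cR_cocycle (g h : Γ) (b : Sg) :
    cR Ω (g * h) b = cR Ω g (α h b) * cR Ω h b := by
  have hgh : tau hΩ (inr (g * h) : Sg ⋊[α] Γ)
      = iota hΩ (Ω (inr g) (inr h))⁻¹ * (tau hΩ (inr g) * tau hΩ (inr h)) := by
    rw [tau_mul, ← map_mul, iota_inv_mul]
  have E1 : tau hΩ (inr (g * h) : Sg ⋊[α] Γ) * tau hΩ (inl b)
      = iota hΩ (cR Ω (g * h) b) * (tau hΩ (inl (α (g * h) b)) * tau hΩ (inr (g * h))) :=
    tau_conj hΩ (g * h) b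
  have E2 : tau hΩ (inr (g * h) : Sg ⋊[α] Γ) * tau hΩ (inl b)
      = iota hΩ ((Ω (inr g) (inr h))⁻¹ * (cR Ω h b * (cR Ω g (α h b) * Ω (inr g) (inr h)))) *
          (tau hΩ (inl (α (g * h) b)) * tau hΩ (inr (g * h))) := by
    calc tau hΩ (inr (g * h) : Sg ⋊[α] Γ) * tau hΩ (inl b)
        = (iota hΩ (Ω (inr g) (inr h))⁻¹ * (tau hΩ (inr g) * tau hΩ (inr h))) *
            tau hΩ (inl b) := by rw [hgh]
      _ = iota hΩ (Ω (inr g) (inr h))⁻¹ * (tau hΩ (inr g) * (tau hΩ (inr h) *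
            tau hΩ (inl b))) := by rw [mul_assoc, mul_assoc]
      _ = iota hΩ (Ω (inr g) (inr h))⁻¹ * (tau hΩ (inr g) * (iota hΩ (cR Ω h b) *
            (tau hΩ (inl (α h b)) * tau hΩ (inr h)))) := by rw [tau_conj hΩ h b]
      _ = iota hΩ (Ω (inr g) (inr h))⁻¹ * (iota hΩ (cR Ω h b) * (tau hΩ (inr g) *
            (tau hΩ (inl (α h b)) * tau hΩ (inr h)))) := by rw [pull]
      _ = iota hΩ (Ω (inr g) (inr h))⁻¹ * (iota hΩ (cR Ω h b) * ((tau hΩ (inr g) *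
            tau hΩ (inl (α h b))) * tau hΩ (inr h))) := by rw [mul_assoc]
      _ = iota hΩ (Ω (inr g) (inr h))⁻¹ * (iota hΩ (cR Ω h b) *
            ((iota hΩ (cR Ω g (α h b)) * (tau hΩ (inl (α g (α h b))) * tau hΩ (inr g))) *
              tau hΩ (inr h))) := by rw [tau_conj hΩ g (α h b)]
      _ = iota hΩ (Ω (inr g) (inr h))⁻¹ * (iota hΩ (cR Ω h b) * (iota hΩ (cR Ω g (α h b)) *
            (tau hΩ (inl (α g (α h b))) * (tau hΩ (inr g) * tau hΩ (inr h))))) := by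
          simp only [mul_assoc]
      _ = iota hΩ (Ω (inr g) (inr h))⁻¹ * (iota hΩ (cR Ω h b) * (iota hΩ (cR Ω g (α h b)) *
            (tau hΩ (inl (α g (α h b))) * (iota hΩ (Ω (inr g) (inr h)) *
              tau hΩ (inr (g * h)))))) := by rw [tau_mul, ← map_mul]
      _ = iota hΩ (Ω (inr g) (inr h))⁻¹ * (iota hΩ (cR Ω h b) * (iota hΩ (cR Ω g (α h b)) *
            (iota hΩ (Ω (inr g) (inr h)) * (tau hΩ (inl (α g (α h b))) *
              tau hΩ (inr (g * h)))))) := by rw [pull (Ω (inr g) (inr h))]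
      _ = iota hΩ ((Ω (inr g) (inr h))⁻¹ * (cR Ω h b * (cR Ω g (α h b) * Ω (inr g) (inr h)))) *
            (tau hΩ (inl (α g (α h b))) * tau hΩ (inr (g * h))) := by
          simp only [iota_mul, mul_assoc]
      _ = iota hΩ ((Ω (inr g) (inr h))⁻¹ * (cR Ω h b * (cR Ω g (α h b) * Ω (inr g) (inr h)))) *
            (tau hΩ (inl (α (g * h) b)) * tau hΩ (inr (g * h))) := by
          rw [show α g (α h b) = α (g * h) b from by rw [map_mul]; rfl]
  have key := iota_cancel (E1.symm.trans E2)
  apply circle_eq_of_c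
  have key' := circ_c key
  push_cast at key'
  have h1 : ((Ω (inr g) (inr h) : Circle) : ℂ) ≠ 0 := Circle.coe_ne_zero _
  field_simp at key'
  push_cast
  apply mul_left_cancel₀ h1
  linear_combination ((Ω (inr g) (inr h) : Circle) : ℂ) * key'

include hΩ in
lemma master (a b : Sg) (g h : Γ) :
    Ω (inl a) (inr g) * (Ω (inl b) (inr h) * Ω (inl a * inr g) (inl b * inr h))
      = cR Ω g b * (Ω (inr g) (inr h) * (Ω (inl a) (inl (α g b)) *
          Ω (inl (a * α g b)) (inr (g * h)))) := by
  have E1 : (tau hΩ (inl a : Sg ⋊[α] Γ) * tau hΩ (inr g)) * (tau hΩ (inl b) * tau hΩ (inr h))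
      = iota hΩ (Ω (inl a) (inr g) * (Ω (inl b) (inr h) * Ω (inl a * inr g) (inl b * inr h))) *
          tau hΩ ((inl a * inr g) * (inl b * inr h)) := by
    calc (tau hΩ (inl a : Sg ⋊[α] Γ) * tau hΩ (inr g)) * (tau hΩ (inl b) * tau hΩ (inr h))
        = (iota hΩ (Ω (inl a) (inr g)) * tau hΩ (inl a * inr g)) *
            (iota hΩ (Ω (inl b) (inr h)) * tau hΩ (inl b * inr h)) := by
          rw [tau_mul (inl a) (inr g), tau_mul (inl b) (inr h)]
      _ = iota hΩ (Ω (inl a) (inr g)) * (tau hΩ (inl a * inr g) *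
            (iota hΩ (Ω (inl b) (inr h)) * tau hΩ (inl b * inr h))) := by rw [mul_assoc]
      _ = iota hΩ (Ω (inl a) (inr g)) * (iota hΩ (Ω (inl b) (inr h)) *
            (tau hΩ (inl a * inr g) * tau hΩ (inl b * inr h))) := by rw [pull]
      _ = iota hΩ (Ω (inl a) (inr g)) * (iota hΩ (Ω (inl b) (inr h)) *
            (iota hΩ (Ω (inl a * inr g) (inl b * inr h)) *
              tau hΩ ((inl a * inr g) * (inl b * inr h)))) := by rw [tau_mul]
      _ = iota hΩ (Ω (inl a) (inr g) * (Ω (inl b) (inr h) * Ω (inl a * inr g) (inl b * inr h))) *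
            tau hΩ ((inl a * inr g) * (inl b * inr h)) := by simp only [iota_mul, mul_assoc]
  have E2 : (tau hΩ (inl a : Sg ⋊[α] Γ) * tau hΩ (inr g)) * (tau hΩ (inl b) * tau hΩ (inr h))
      = iota hΩ (cR Ω g b * (Ω (inr g) (inr h) * (Ω (inl a) (inl (α g b)) *
          Ω (inl (a * α g b)) (inr (g * h))))) *
          tau hΩ ((inl a * inr g) * (inl b * inr h)) := by
    calc (tau hΩ (inl a : Sg ⋊[α] Γ) * tau hΩ (inr g)) * (tau hΩ (inl b) * tau hΩ (inr h))
        = tau hΩ (inl a) * ((tau hΩ (inr g) * tau hΩ (inl b)) * tau hΩ (inr h)) := by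
          simp only [mul_assoc]
      _ = tau hΩ (inl a) * ((iota hΩ (cR Ω g b) * (tau hΩ (inl (α g b)) * tau hΩ (inr g))) *
            tau hΩ (inr h)) := by rw [tau_conj hΩ g b]
      _ = tau hΩ (inl a) * (iota hΩ (cR Ω g b) * (tau hΩ (inl (α g b)) *
            (tau hΩ (inr g) * tau hΩ (inr h)))) := by simp only [mul_assoc]
      _ = iota hΩ (cR Ω g b) * (tau hΩ (inl a) * (tau hΩ (inl (α g b)) *
            (tau hΩ (inr g) * tau hΩ (inr h)))) := by rw [pull]
      _ = iota hΩ (cR Ω g b) * (tau hΩ (inl a) * (tau hΩ (inl (α g b)) *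
            (iota hΩ (Ω (inr g) (inr h)) * tau hΩ (inr (g * h))))) := by rw [tau_mul, ← map_mul]
      _ = iota hΩ (cR Ω g b) * (iota hΩ (Ω (inr g) (inr h)) * (tau hΩ (inl a) *
            (tau hΩ (inl (α g b)) * tau hΩ (inr (g * h))))) := by rw [pull, pull]
      _ = iota hΩ (cR Ω g b) * (iota hΩ (Ω (inr g) (inr h)) * (((tau hΩ (inl a) *
            tau hΩ (inl (α g b))) * tau hΩ (inr (g * h))))) := by rw [mul_assoc]
      _ = iota hΩ (cR Ω g b) * (iota hΩ (Ω (inr g) (inr h)) *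
            ((iota hΩ (Ω (inl a) (inl (α g b))) * tau hΩ (inl (a * α g b))) *
              tau hΩ (inr (g * h)))) := by rw [tau_mul, ← map_mul]
      _ = iota hΩ (cR Ω g b) * (iota hΩ (Ω (inr g) (inr h)) *
            (iota hΩ (Ω (inl a) (inl (α g b))) * (tau hΩ (inl (a * α g b)) *
              tau hΩ (inr (g * h))))) := by rw [mul_assoc]
      _ = iota hΩ (cR Ω g b) * (iota hΩ (Ω (inr g) (inr h)) *
            (iota hΩ (Ω (inl a) (inl (α g b))) * (iota hΩ (Ω (inl (a * α g b)) (inr (g * h))) *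
              tau hΩ (inl (a * α g b) * inr (g * h))))) := by rw [tau_mul]
      _ = iota hΩ (cR Ω g b * (Ω (inr g) (inr h) * (Ω (inl a) (inl (α g b)) *
            Ω (inl (a * α g b)) (inr (g * h))))) * tau hΩ (inl (a * α g b) * inr (g * h)) := by
          simp only [iota_mul, mul_assoc]
      _ = iota hΩ (cR Ω g b * (Ω (inr g) (inr h) * (Ω (inl a) (inl (α g b)) *
            Ω (inl (a * α g b)) (inr (g * h))))) *
            tau hΩ ((inl a * inr g) * (inl b * inr h)) := by rw [sd_mul]
  exact iota_cancel (E1.symm.trans E2)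

lemma chiR_one (hΩ : IsMulCocycle Ω) (b : Sg) : chiR Ω (1 : Sg) b = 1 := by
  simp [chiR, hΩ.2.1, hΩ.2.2]

end Semidirect
end TwE
section MatrixSemidirect
set_option linter.unusedSectionVars false
open SemidirectProduct TwE
variable {Γ Sg : Type*} [Group Γ] [CommGroup Sg] {α : Γ →* MulAut Sg}
  {Ω : Sg ⋊[α] Γ → Sg ⋊[α] Γ → Circle} {d : ℕ}
  {π : Sg ⋊[α] Γ → Matrix.unitaryGroup (Fin d) ℂ}

lemma p_comm_rel (hπ : Hpi Ω π) (a b : Sg) :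
    (π (inl b) : Matrix (Fin d) (Fin d) ℂ) * (π (inl a) : Matrix (Fin d) (Fin d) ℂ)
      = (chiR Ω a b : ℂ) •
        ((π (inl a) : Matrix (Fin d) (Fin d) ℂ) * (π (inl b) : Matrix (Fin d) (Fin d) ℂ)) := by
  rw [hπ, hπ, inl_comm a b, smul_smul]
  congr 1
  simp only [chiR, Circle.coe_mul, Circle.coe_inv]
  field_simp

lemma p_sq (hΩ : IsMulCocycle Ω) (hπ : Hpi Ω π) (hSg : ∀ a : Sg, a * a = 1) (a : Sg) :
    (π (inl a) : Matrix (Fin d) (Fin d) ℂ) * (π (inl a) : Matrix (Fin d) (Fin d) ℂ)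
      = (Ω (inl a) (inl a) : ℂ) • 1 := by
  rw [hπ, ← map_mul, hSg a, map_one, pi_one hΩ hπ]

lemma p_conj (hπ : Hpi Ω π) (g : Γ) (b : Sg) :
    (π (inr g) : Matrix (Fin d) (Fin d) ℂ) * (π (inl b) : Matrix (Fin d) (Fin d) ℂ)
      = (cR Ω g b : ℂ) •
        ((π (inl (α g b)) : Matrix (Fin d) (Fin d) ℂ) *
          (π (inr g) : Matrix (Fin d) (Fin d) ℂ)) := by
  rw [hπ, hπ, inr_mul_inl g b, smul_smul]
  congr 1
  simp only [cR, Circle.coe_mul, Circle.coe_inv]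
  field_simp

lemma p_conj' (hπ : Hpi Ω π) (g : Γ) (b : Sg) :
    (π (inr g) : Matrix (Fin d) (Fin d) ℂ) * (π (inl b) : Matrix (Fin d) (Fin d) ℂ) *
        star (π (inr g) : Matrix (Fin d) (Fin d) ℂ)
      = (cR Ω g b : ℂ) • (π (inl (α g b)) : Matrix (Fin d) (Fin d) ℂ) := by
  rw [p_conj hπ g b, smul_mul_assoc, mul_assoc, mul_star_self, mul_one]

lemma chiR_sq (hΩ : IsMulCocycle Ω) (hSg : ∀ a : Sg, a * a = 1) (a b : Sg) :
    chiR Ω a b * chiR Ω a b = 1 := by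
  rw [← chiR_mul (hΩ := hΩ) a a b, hSg a, chiR_one hΩ b]

lemma trace_orth (hΩ : IsMulCocycle Ω) (hπ : Hpi Ω π) (hSg : ∀ a : Sg, a * a = 1)
    {a a' : Sg} (h : chiR Ω a ≠ chiR Ω a') :
    ((π (inl a) : Matrix (Fin d) (Fin d) ℂ) *
      (π (inl a') : Matrix (Fin d) (Fin d) ℂ)).trace = 0 := by
  obtain ⟨b, hb⟩ := Function.ne_iff.mp h
  set A := (π (inl a) : Matrix (Fin d) (Fin d) ℂ)
  set A' := (π (inl a') : Matrix (Fin d) (Fin d) ℂ)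
  set B := (π (inl b) : Matrix (Fin d) (Fin d) ℂ)
  have key : B * (A * A') * star B
      = ((chiR Ω a b : ℂ) * (chiR Ω a' b : ℂ)) • (A * A') := by
    have h1 : B * (A * A') = ((chiR Ω a b : ℂ) * (chiR Ω a' b : ℂ)) • (A * A' * B) := by
      calc B * (A * A') = (B * A) * A' := (mul_assoc _ _ _).symm
        _ = ((chiR Ω a b : ℂ) • (A * B)) * A' := by rw [p_comm_rel hπ a b]
        _ = (chiR Ω a b : ℂ) • (A * (B * A')) := by
            rw [smul_mul_assoc, mul_assoc]
        _ = (chiR Ω a b : ℂ) • (A * ((chiR Ω a' b : ℂ) • (A' * B))) := by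
            rw [p_comm_rel hπ a' b]
        _ = ((chiR Ω a b : ℂ) * (chiR Ω a' b : ℂ)) • (A * A' * B) := by
            rw [mul_smul_comm, smul_smul, mul_assoc]
    rw [h1, smul_mul_assoc, mul_assoc, mul_star_self, mul_one]
  have hcyc : (B * (A * A') * star B).trace = (A * A').trace := by
    rw [Matrix.trace_mul_cycle, star_mul_self' (π := π) (inl b), one_mul]
  have htr : (A * A').trace = ((chiR Ω a b : ℂ) * (chiR Ω a' b : ℂ)) * (A * A').trace := by
    conv_lhs => rw [← hcyc]
    rw [key, Matrix.trace_smul, smul_eq_mul]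
  have hchi : (chiR Ω a b : ℂ) * (chiR Ω a' b : ℂ) ≠ 1 := by
    intro hc
    apply hb
    apply Circle.coe_injective
    have s2 : (chiR Ω a' b : ℂ) * (chiR Ω a' b : ℂ) = 1 := by
      rw [← Circle.coe_mul, chiR_sq hΩ hSg, Circle.coe_one]
    calc (chiR Ω a b : ℂ) = (chiR Ω a b : ℂ) * ((chiR Ω a' b : ℂ) * (chiR Ω a' b : ℂ)) := by
          rw [s2, mul_one]
      _ = ((chiR Ω a b : ℂ) * (chiR Ω a' b : ℂ)) * (chiR Ω a' b : ℂ) := by ring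
      _ = (chiR Ω a' b : ℂ) := by rw [hc, one_mul]
  have : (1 - (chiR Ω a b : ℂ) * (chiR Ω a' b : ℂ)) * (A * A').trace = 0 := by
    linear_combination htr
  rcases mul_eq_zero.mp this with hzero | hzero
  · exact absurd (by linear_combination -hzero) hchi
  · exact hzero

lemma trace_self (hΩ : IsMulCocycle Ω) (hπ : Hpi Ω π) (hSg : ∀ a : Sg, a * a = 1) (a : Sg) :
    ((π (inl a) : Matrix (Fin d) (Fin d) ℂ) *
      (π (inl a) : Matrix (Fin d) (Fin d) ℂ)).trace = (Ω (inl a) (inl a) : ℂ) * d := by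
  rw [p_sq hΩ hπ hSg a, Matrix.trace_smul, Matrix.trace_one, smul_eq_mul]
  simp

lemma chi_range_finite (hd : 0 < d) (hΩ : IsMulCocycle Ω) (hπ : Hpi Ω π)
    (hSg : ∀ a : Sg, a * a = 1) :
    (Set.range (chiR Ω : Sg → Sg → Circle)).Finite := by
  rw [← Set.finite_coe_iff]
  set R := Set.range (chiR Ω : Sg → Sg → Circle) with hR
  let pick : R → Sg := fun r => r.2.choose
  have hspec : ∀ r : R, chiR Ω (pick r) = (r : Sg → Circle) := fun r => r.2.choose_spec
  let v : R → Matrix (Fin d) (Fin d) ℂ := fun r => (π (inl (pick r)) : Matrix (Fin d) (Fin d) ℂ)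
  have hli : LinearIndependent ℂ v := by
    rw [linearIndependent_iff']
    intro s gcoef hsum i hi
    have h2 := congrArg
      (fun M : Matrix (Fin d) (Fin d) ℂ => ((π (inl (pick i)) : Matrix (Fin d) (Fin d) ℂ) * M).trace)
      hsum
    simp only [Finset.mul_sum, Matrix.mul_sum, Matrix.mul_smul, Matrix.trace_sum,
      Matrix.trace_smul, smul_eq_mul, mul_zero, Matrix.trace_zero] at h2
    rw [Finset.sum_eq_single i] at h2
    · rw [trace_self hΩ hπ hSg] at h2
      have hne : (Ω (inl (pick i)) (inl (pick i)) : ℂ) * (d : ℂ) ≠ 0 :=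
        mul_ne_zero (Circle.coe_ne_zero _) (Nat.cast_ne_zero.mpr hd.ne')
      exact (mul_eq_zero.mp h2).resolve_right hne
    · intro r hr hne
      rw [trace_orth hΩ hπ hSg, mul_zero]
      intro hcontra
      apply hne
      apply Subtype.ext
      rw [← hspec i, ← hspec r, hcontra]
    · intro hcontra
      exact absurd hi hcontra
  exact hli.finite
end MatrixSemidirect

section AlgebraPart
set_option linter.unusedSectionVars false
open SemidirectProduct TwE
variable {Γ Sg : Type*} [Group Γ] [CommGroup Sg] {α : Γ →* MulAut Sg}
  {Ω : Sg ⋊[α] Γ → Sg ⋊[α] Γ → Circle} {d : ℕ}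
  {π : Sg ⋊[α] Γ → Matrix.unitaryGroup (Fin d) ℂ}

variable (Ω) in
/-- membership in the radical subgroup. -/
def SProp (a : Sg) : Prop := ∀ b, chiR Ω a b = 1

variable (Ω π) in
/-- generators for the commutative algebra. -/
def genSet : Set (Matrix (Fin d) (Fin d) ℂ) :=
  {M | ∃ a, SProp Ω a ∧ (π (inl a) : Matrix (Fin d) (Fin d) ℂ) = M}

variable (Ω π) in
/-- the commutative algebra generated by the `π (inl a)`, `a` in the radical. -/
noncomputable def algA : Subalgebra ℂ (Matrix (Fin d) (Fin d) ℂ) :=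
  Algebra.adjoin ℂ (genSet Ω π)

lemma SProp_one (hΩ : IsMulCocycle Ω) : SProp Ω (1 : Sg) := fun b => chiR_one hΩ b

lemma SProp_mul (hΩ : IsMulCocycle Ω) {a a' : Sg} (ha : SProp Ω a) (ha' : SProp Ω a') :
    SProp Ω (a * a') := by
  intro b
  rw [chiR_mul (hΩ := hΩ), ha b, ha' b, mul_one]

lemma SProp_inv (hΩ : IsMulCocycle Ω) (hSg : ∀ a : Sg, a * a = 1) {a : Sg} (ha : SProp Ω a) :
    SProp Ω a⁻¹ := by
  rw [inv_eq_of_mul_eq_one_right (hSg a)]; exact ha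

lemma alpha_apply_inv (g : Γ) (x : Sg) : α g (α g⁻¹ x) = x := by
  rw [← MulAut.mul_apply, ← map_mul, mul_inv_cancel, map_one, MulAut.one_apply]

lemma SProp_alpha (hΩ : IsMulCocycle Ω) (g : Γ) {a : Sg} (ha : SProp Ω a) :
    SProp Ω (α g a) := by
  intro b
  rw [← alpha_apply_inv (α := α) g b, chiR_invariant (hΩ := hΩ)]
  exact ha _

lemma genSet_comm (hπ : Hpi Ω π) :
    ∀ M ∈ genSet Ω π, ∀ N ∈ genSet Ω π, M * N = N * M := by
  rintro M ⟨a, ha, rfl⟩ N ⟨b, hb, rfl⟩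
  have h := p_comm_rel hπ b a
  rwa [hb a, Circle.coe_one, one_smul] at h

lemma mem_algA_of_SProp (hπ : Hpi Ω π) {a : Sg} (ha : SProp Ω a) :
    (π (inl a) : Matrix (Fin d) (Fin d) ℂ) ∈ algA Ω π :=
  Algebra.subset_adjoin ⟨a, ha, rfl⟩

lemma conj_mem_algA (hΩ : IsMulCocycle Ω) (hπ : Hpi Ω π) (g : Γ) :
    ∀ x ∈ algA Ω π,
      (π (inr g) : Matrix (Fin d) (Fin d) ℂ) * x * star (π (inr g) : Matrix (Fin d) (Fin d) ℂ)
        ∈ algA Ω π := by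
  intro x hx
  induction hx using Algebra.adjoin_induction with
  | mem M hM =>
      obtain ⟨a, ha, rfl⟩ := hM
      rw [p_conj' hπ g a]
      exact Subalgebra.smul_mem _ (mem_algA_of_SProp hπ (SProp_alpha hΩ g ha)) _
  | algebraMap r =>
      have : (π (inr g) : Matrix (Fin d) (Fin d) ℂ) * algebraMap ℂ _ r *
          star (π (inr g) : Matrix (Fin d) (Fin d) ℂ) = algebraMap ℂ _ r := by
        rw [Algebra.algebraMap_eq_smul_one, mul_smul_comm, mul_one, smul_mul_assoc,
          mul_star_self]
      rw [this]
      exact Subalgebra.algebraMap_mem _ r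
  | add x y hx hy hx' hy' =>
      rw [mul_add, add_mul]
      exact add_mem hx' hy'
  | mul x y hx hy hx' hy' =>
      have : (π (inr g) : Matrix (Fin d) (Fin d) ℂ) * (x * y) *
          star (π (inr g) : Matrix (Fin d) (Fin d) ℂ)
          = ((π (inr g) : Matrix (Fin d) (Fin d) ℂ) * x *
              star (π (inr g) : Matrix (Fin d) (Fin d) ℂ)) *
            ((π (inr g) : Matrix (Fin d) (Fin d) ℂ) * y *
              star (π (inr g) : Matrix (Fin d) (Fin d) ℂ)) := by
        have hssm : star (π (inr g) : Matrix (Fin d) (Fin d) ℂ) *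
            (π (inr g) : Matrix (Fin d) (Fin d) ℂ) = 1 := star_mul_self' (inr g)
        calc (π (inr g) : Matrix (Fin d) (Fin d) ℂ) * (x * y) *
              star (π (inr g) : Matrix (Fin d) (Fin d) ℂ)
            = (π (inr g) : Matrix (Fin d) (Fin d) ℂ) * (x * ((star (π (inr g) :
                Matrix (Fin d) (Fin d) ℂ) * (π (inr g) : Matrix (Fin d) (Fin d) ℂ)) *
                  (y * star (π (inr g) : Matrix (Fin d) (Fin d) ℂ)))) := by
              rw [hssm, one_mul]; simp only [Matrix.mul_assoc]
          _ = _ := by simp only [Matrix.mul_assoc]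
      rw [this]
      exact mul_mem hx' hy'

variable (hΩ : IsMulCocycle Ω) (hπ : Hpi Ω π)

/-- conjugation by `π (inr g)` as an algebra endomorphism of `algA`. -/
noncomputable def conjW (hΩ : IsMulCocycle Ω) (hπ : Hpi Ω π) (g : Γ) :
    ↥(algA Ω π) →ₐ[ℂ] ↥(algA Ω π) where
  toFun x := ⟨(π (inr g) : Matrix (Fin d) (Fin d) ℂ) * (x : Matrix (Fin d) (Fin d) ℂ) *
      star (π (inr g) : Matrix (Fin d) (Fin d) ℂ), conj_mem_algA hΩ hπ g _ x.2⟩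
  map_one' := by
    apply Subtype.ext
    show (π (inr g) : Matrix (Fin d) (Fin d) ℂ) * 1 * star _ = 1
    rw [mul_one, mul_star_self]
  map_mul' x y := by
    apply Subtype.ext
    show (π (inr g) : Matrix (Fin d) (Fin d) ℂ) * ((x : Matrix (Fin d) (Fin d) ℂ) * y) * star _
      = ((π (inr g) : Matrix (Fin d) (Fin d) ℂ) * x * star _) *
        ((π (inr g) : Matrix (Fin d) (Fin d) ℂ) * y * star _)
    have hssm : star (π (inr g) : Matrix (Fin d) (Fin d) ℂ) *
        (π (inr g) : Matrix (Fin d) (Fin d) ℂ) = 1 := star_mul_self' (inr g)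
    calc (π (inr g) : Matrix (Fin d) (Fin d) ℂ) * ((x : Matrix (Fin d) (Fin d) ℂ) * y) *
          star (π (inr g) : Matrix (Fin d) (Fin d) ℂ)
        = (π (inr g) : Matrix (Fin d) (Fin d) ℂ) * ((x : Matrix (Fin d) (Fin d) ℂ) *
            ((star (π (inr g) : Matrix (Fin d) (Fin d) ℂ) *
              (π (inr g) : Matrix (Fin d) (Fin d) ℂ)) *
                ((y : Matrix (Fin d) (Fin d) ℂ) *
                  star (π (inr g) : Matrix (Fin d) (Fin d) ℂ)))) := by
          rw [hssm, one_mul]; simp only [Matrix.mul_assoc]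
      _ = _ := by simp only [Matrix.mul_assoc]
  map_zero' := by
    apply Subtype.ext
    show (π (inr g) : Matrix (Fin d) (Fin d) ℂ) * 0 * star _ = 0
    rw [mul_zero, zero_mul]
  map_add' x y := by
    apply Subtype.ext
    show (π (inr g) : Matrix (Fin d) (Fin d) ℂ) * ((x : Matrix (Fin d) (Fin d) ℂ) + y) * star _
      = (π (inr g) : Matrix (Fin d) (Fin d) ℂ) * x * star _ +
        (π (inr g) : Matrix (Fin d) (Fin d) ℂ) * y * star _
    rw [mul_add, add_mul]
  commutes' r := by
    apply Subtype.ext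
    show (π (inr g) : Matrix (Fin d) (Fin d) ℂ) *
        ((algebraMap ℂ ↥(algA Ω π) r : ↥(algA Ω π)) : Matrix (Fin d) (Fin d) ℂ) * star _
      = ((algebraMap ℂ ↥(algA Ω π) r : ↥(algA Ω π)) : Matrix (Fin d) (Fin d) ℂ)
    rw [Subalgebra.coe_algebraMap, Algebra.algebraMap_eq_smul_one, mul_smul_comm, mul_one,
      smul_mul_assoc, mul_star_self]

/-- Any set of `ℂ`-algebra characters of a finite-dimensional algebra is finite. -/
lemma algHom_set_finite {B : Type*} [Ring B] [Algebra ℂ B] [FiniteDimensional ℂ B]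
    (S : Set (B →ₐ[ℂ] ℂ)) : S.Finite := by
  rw [← Set.finite_coe_iff]
  let coeF : (B →ₗ[ℂ] ℂ) →ₗ[ℂ] (B → ℂ) :=
    { toFun := fun ℓ => ⇑ℓ, map_add' := fun _ _ => rfl, map_smul' := fun _ _ => rfl }
  have hinj : Function.Injective (fun s : S => ((s : B →ₐ[ℂ] ℂ) : B →* ℂ)) := by
    intro x y hxy
    have h2 : ((x : B →ₐ[ℂ] ℂ) : B →* ℂ) = ((y : B →ₐ[ℂ] ℂ) : B →* ℂ) := hxy
    apply Subtype.ext
    apply DFunLike.coe_injective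
    exact congrArg (fun f : B →* ℂ => (f : B → ℂ)) h2
  have hcomp : LinearIndependent ℂ
      (fun s : S => (((s : B →ₐ[ℂ] ℂ) : B →* ℂ) : B → ℂ)) :=
    (linearIndependent_monoidHom B ℂ).comp _ hinj
  have hli : LinearIndependent ℂ (fun s : S => ((s : B →ₐ[ℂ] ℂ).toLinearMap : B →ₗ[ℂ] ℂ)) := by
    apply LinearIndependent.of_comp coeF
    exact hcomp
  exact hli.finite

end AlgebraPart

section FLayer
set_option linter.unusedSectionVars false
open SemidirectProduct TwE
variable {Γ Sg : Type*} [Group Γ] [CommGroup Sg] {α : Γ →* MulAut Sg}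
  {Ω : Sg ⋊[α] Γ → Sg ⋊[α] Γ → Circle} {d : ℕ}
  {π : Sg ⋊[α] Γ → Matrix.unitaryGroup (Fin d) ℂ}

open scoped Classical in
/-- The function trivializing `Ω` on the radical. -/
noncomputable def fdef (lam : ↥(algA Ω π) →ₐ[ℂ] ℂ) : Sg → ℂ := fun a =>
  if h : SProp Ω a then
    lam ⟨(π (inl a) : Matrix (Fin d) (Fin d) ℂ), Algebra.subset_adjoin ⟨a, h, rfl⟩⟩ else 1

lemma fdef_of (lam : ↥(algA Ω π) →ₐ[ℂ] ℂ) {a : Sg} (h : SProp Ω a) :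
    fdef lam a = lam ⟨(π (inl a) : Matrix (Fin d) (Fin d) ℂ),
      Algebra.subset_adjoin ⟨a, h, rfl⟩⟩ := dif_pos h

lemma f_mul (lam : ↥(algA Ω π) →ₐ[ℂ] ℂ) (hΩ : IsMulCocycle Ω) (hπ : Hpi Ω π)
    {a b : Sg} (ha : SProp Ω a) (hb : SProp Ω b) :
    fdef lam a * fdef lam b = (Ω (inl a) (inl b) : ℂ) * fdef lam (a * b) := by
  rw [fdef_of lam ha, fdef_of lam hb, fdef_of lam (SProp_mul hΩ ha hb), ← map_mul]
  have hx : (⟨(π (inl a) : Matrix (Fin d) (Fin d) ℂ), Algebra.subset_adjoin ⟨a, ha, rfl⟩⟩ *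
      ⟨(π (inl b) : Matrix (Fin d) (Fin d) ℂ), Algebra.subset_adjoin ⟨b, hb, rfl⟩⟩ :
        ↥(algA Ω π))
      = (Ω (inl a) (inl b) : ℂ) • ⟨(π (inl (a * b)) : Matrix (Fin d) (Fin d) ℂ),
          Algebra.subset_adjoin ⟨a * b, SProp_mul hΩ ha hb, rfl⟩⟩ := by
    apply Subtype.ext
    show (π (inl a) : Matrix (Fin d) (Fin d) ℂ) * (π (inl b) : Matrix (Fin d) (Fin d) ℂ)
      = (Ω (inl a) (inl b) : ℂ) • (π (inl (a * b)) : Matrix (Fin d) (Fin d) ℂ)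
    rw [hπ, ← map_mul]
  rw [hx, map_smul, smul_eq_mul]

lemma f_one (lam : ↥(algA Ω π) →ₐ[ℂ] ℂ) (hΩ : IsMulCocycle Ω) (hπ : Hpi Ω π) :
    fdef lam 1 = 1 := by
  rw [fdef_of lam (SProp_one hΩ)]
  have hx : (⟨(π (inl (1 : Sg)) : Matrix (Fin d) (Fin d) ℂ),
      Algebra.subset_adjoin ⟨1, SProp_one hΩ, rfl⟩⟩ : ↥(algA Ω π)) = 1 := by
    apply Subtype.ext
    show (π (inl (1 : Sg)) : Matrix (Fin d) (Fin d) ℂ) = 1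
    rw [map_one, pi_one hΩ hπ]
  rw [hx, map_one]

lemma f_abs (lam : ↥(algA Ω π) →ₐ[ℂ] ℂ) (hΩ : IsMulCocycle Ω) (hπ : Hpi Ω π)
    (hSg : ∀ a : Sg, a * a = 1) (a : Sg) : ‖fdef lam a‖ = 1 := by
  by_cases h : SProp Ω a
  · have hsq : fdef lam a * fdef lam a = (Ω (inl a) (inl a) : ℂ) := by
      rw [f_mul lam hΩ hπ h h, hSg a, f_one lam hΩ hπ, mul_one]
    have h2 : ‖fdef lam a‖ * ‖fdef lam a‖ = 1 := by
      rw [← norm_mul, hsq, Circle.norm_coe]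
    nlinarith [norm_nonneg (fdef lam a)]
  · simp [fdef, h]

lemma f_ne (lam : ↥(algA Ω π) →ₐ[ℂ] ℂ) (hΩ : IsMulCocycle Ω) (hπ : Hpi Ω π)
    (hSg : ∀ a : Sg, a * a = 1) (a : Sg) : fdef lam a ≠ 0 := by
  intro h0
  have := f_abs lam hΩ hπ hSg a
  rw [h0] at this
  simp at this

lemma conjW_apply (lam : ↥(algA Ω π) →ₐ[ℂ] ℂ) (hΩ : IsMulCocycle Ω) (hπ : Hpi Ω π)
    (g : Γ) {b : Sg} (hb : SProp Ω b) :
    lam (conjW hΩ hπ g ⟨(π (inl b) : Matrix (Fin d) (Fin d) ℂ),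
        Algebra.subset_adjoin ⟨b, hb, rfl⟩⟩)
      = (cR Ω g b : ℂ) * fdef lam (α g b) := by
  have hx : conjW hΩ hπ g (⟨(π (inl b) : Matrix (Fin d) (Fin d) ℂ),
      Algebra.subset_adjoin ⟨b, hb, rfl⟩⟩ : ↥(algA Ω π))
      = (cR Ω g b : ℂ) • ⟨(π (inl (α g b)) : Matrix (Fin d) (Fin d) ℂ),
          Algebra.subset_adjoin ⟨α g b, SProp_alpha hΩ g hb, rfl⟩⟩ := by
    apply Subtype.ext
    exact p_conj' hπ g b
  rw [hx, map_smul, smul_eq_mul, ← fdef_of lam (SProp_alpha hΩ g hb)]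

variable (Ω) in
/-- The crossed homomorphism measuring compatibility of `f` with the `Γ`-action. -/
noncomputable def nuF (lam : ↥(algA Ω π) →ₐ[ℂ] ℂ) : Γ → Sg → ℂ := fun g b =>
  (cR Ω g b : ℂ) * fdef lam (α g b) * (fdef lam b)⁻¹

lemma cR_one (hΩ : IsMulCocycle Ω) (b : Sg) : cR Ω (1 : Γ) b = 1 := by
  simp [cR, hΩ.2.1, hΩ.2.2, map_one]

lemma nu_one (lam : ↥(algA Ω π) →ₐ[ℂ] ℂ) (hΩ : IsMulCocycle Ω) (hπ : Hpi Ω π)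
    (hSg : ∀ a : Sg, a * a = 1) (b : Sg) : nuF Ω lam 1 b = 1 := by
  have h1 : α (1 : Γ) b = b := by rw [map_one, MulAut.one_apply]
  rw [nuF, cR_one hΩ, Circle.coe_one, one_mul, h1, mul_inv_cancel₀ (f_ne lam hΩ hπ hSg b)]

lemma nu_ne (lam : ↥(algA Ω π) →ₐ[ℂ] ℂ) (hΩ : IsMulCocycle Ω) (hπ : Hpi Ω π)
    (hSg : ∀ a : Sg, a * a = 1) (g : Γ) (b : Sg) : nuF Ω lam g b ≠ 0 := by
  apply mul_ne_zero (mul_ne_zero (Circle.coe_ne_zero _) (f_ne lam hΩ hπ hSg _))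
  exact inv_ne_zero (f_ne lam hΩ hπ hSg _)

lemma nu_crossed (lam : ↥(algA Ω π) →ₐ[ℂ] ℂ) (hΩ : IsMulCocycle Ω) (hπ : Hpi Ω π)
    (hSg : ∀ a : Sg, a * a = 1) (g h : Γ) (b : Sg) :
    nuF Ω lam (g * h) b = nuF Ω lam g (α h b) * nuF Ω lam h b := by
  have hc := circ_c (cR_cocycle (hΩ := hΩ) g h b)
  push_cast at hc
  have hαα : α g (α h b) = α (g * h) b := by rw [map_mul]; rfl
  rw [nuF, nuF, nuF, hαα, hc]
  have h1 := f_ne lam hΩ hπ hSg (α h b)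
  have h2 := f_ne lam hΩ hπ hSg b
  field_simp

end FLayer
end FTCaux

lemma exists_char (B : Type*) [CommRing B] [Algebra ℂ B] [Nontrivial B]
    [FiniteDimensional ℂ B] : Nonempty (B →ₐ[ℂ] ℂ) := by
  obtain ⟨m, hm⟩ := Ideal.exists_maximal B
  letI := Ideal.Quotient.field m
  haveI : FiniteDimensional ℂ (B ⧸ m) :=
    Module.Finite.of_surjective (Ideal.Quotient.mkₐ ℂ m).toLinearMap
      Ideal.Quotient.mk_surjective
  have hsurj : Function.Surjective (algebraMap ℂ (B ⧸ m)) :=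
    IsAlgClosed.algebraMap_bijective_of_isIntegral.2
  have hinj : Function.Injective (algebraMap ℂ (B ⧸ m)) :=
    (algebraMap ℂ (B ⧸ m)).injective
  let e : ℂ ≃+* (B ⧸ m) := RingEquiv.ofBijective (algebraMap ℂ (B ⧸ m)) ⟨hinj, hsurj⟩
  refine ⟨⟨(e.symm.toRingHom.comp (Ideal.Quotient.mk m)), fun c => ?_⟩⟩
  show e.symm (Ideal.Quotient.mk m (algebraMap ℂ B c)) = c
  have : Ideal.Quotient.mk m (algebraMap ℂ B c) = algebraMap ℂ (B ⧸ m) c := by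
    rw [← Ideal.Quotient.algebraMap_eq, ← IsScalarTower.algebraMap_apply]
  rw [this]
  exact e.symm_apply_apply c

/-- a circle element from a complex number of modulus one. -/
noncomputable def circOf (z : ℂ) (h : z ∈ Submonoid.unitSphere ℂ) : Circle := ⟨z, h⟩

lemma coe_circOf (z : ℂ) (h : z ∈ Submonoid.unitSphere ℂ) : ((circOf z h : Circle) : ℂ) = z := rfl

open FTCaux FTCaux.TwE SemidirectProduct

/-- Let `Γ` act by automorphisms `α` on a countable abelian group `Σ` in which every
nontrivial element has order 2, and let `G = Σ ⋊ Γ`. If `Ω` is a normalized `𝕋`-valued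
2-cocycle on `G` of finite type, then there are finite index subgroups `Σ₀ ≤ Σ` and
`Γ₀ ≤ Γ` with `α_g(Σ₀) = Σ₀` for `g ∈ Γ₀`, and a finite type 2-cocycle `ω₀` on `Γ₀`, such
that the restriction of `Ω` to `G₀ = Σ₀ ⋊ Γ₀` is cohomologous to `((a,g),(b,h)) ↦ ω₀(g,h)`. -/
theorem finiteType_cocycle_on_semidirect_exponentTwo
    {Γ Sg : Type*} [Group Γ] [CommGroup Sg] [Countable Sg]
    (hSg : ∀ a : Sg, a * a = 1) (α : Γ →* MulAut Sg)
    (Ω : (Sg ⋊[α] Γ) → (Sg ⋊[α] Γ) → Circle)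
    (hΩ : IsMulCocycle Ω) (hft : IsFiniteType Ω) :
    ∃ (S₀ : Subgroup Sg) (Γ₀ : Subgroup Γ), S₀.FiniteIndex ∧ Γ₀.FiniteIndex ∧
      (∀ g ∈ Γ₀, Subgroup.map (α g).toMonoidHom S₀ = S₀) ∧
      ∃ ω₀ : Γ₀ → Γ₀ → Circle, IsMulCocycle ω₀ ∧ IsFiniteType ω₀ ∧
        ∃ F : (Sg ⋊[α] Γ) → Circle, F 1 = 1 ∧
          ∀ (x y : Sg ⋊[α] Γ) (_ : x.left ∈ S₀) (hx₂ : x.right ∈ Γ₀)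
            (_ : y.left ∈ S₀) (hy₂ : y.right ∈ Γ₀),
            Ω x y = ω₀ ⟨x.right, hx₂⟩ ⟨y.right, hy₂⟩ * (F x * F y * (F (x * y))⁻¹) := by
  classical
  obtain ⟨d, hd, π, hπ⟩ := hft
  have hpi : Hpi Ω π := hπ
  -- the radical subgroup S₀
  let S₀ : Subgroup Sg :=
    { carrier := {a | SProp Ω a}
      one_mem' := SProp_one hΩ
      mul_mem' := fun ha hb => SProp_mul hΩ ha hb
      inv_mem' := fun ha => SProp_inv hΩ hSg ha }
  -- S₀ has finite index
  have hchi_fin : (Set.range (chiR Ω : Sg → Sg → Circle)).Finite :=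
    chi_range_finite hd hΩ hpi hSg
  haveI := hchi_fin.to_subtype
  have hSquot : Finite (Sg ⧸ S₀) := by
    apply Finite.of_injective (f := fun q : Sg ⧸ S₀ =>
      (⟨chiR Ω q.out, Set.mem_range_self _⟩ : Set.range (chiR Ω : Sg → Sg → Circle)))
    intro q q' hqq
    have h2 : chiR Ω q.out = chiR Ω q'.out := congrArg Subtype.val hqq
    have h3 : SProp Ω (q.out⁻¹ * q'.out) := by
      intro b
      have hinv : chiR Ω (q.out⁻¹) b = (chiR Ω q.out b)⁻¹ := by
        apply eq_inv_of_mul_eq_one_left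
        rw [← chiR_mul (hΩ := hΩ), inv_mul_cancel, chiR_one hΩ]
      rw [chiR_mul (hΩ := hΩ), hinv, h2, inv_mul_cancel]
    rw [← QuotientGroup.out_eq' q, ← QuotientGroup.out_eq' q']
    exact QuotientGroup.eq.mpr h3
  haveI := hSquot
  -- the character lam of the commutative algebra algA
  haveI : FiniteDimensional ℂ ↥(algA Ω π) :=
    FiniteDimensional.finiteDimensional_subalgebra _
  have hmat1 : (1 : Matrix (Fin d) (Fin d) ℂ) ≠ 0 := by
    intro hcon
    have := congrFun (congrFun hcon ⟨0, hd⟩) ⟨0, hd⟩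
    simp [Matrix.one_apply] at this
  have hchar : Nonempty (↥(algA Ω π) →ₐ[ℂ] ℂ) := by
    letI : CommRing ↥(algA Ω π) := { (algA Ω π).toRing with
      mul_comm := (Algebra.adjoinCommRingOfComm ℂ (genSet_comm hpi)).mul_comm }
    haveI : Nontrivial ↥(algA Ω π) :=
      ⟨⟨1, 0, fun hcon => hmat1 (by simpa using congrArg Subtype.val hcon)⟩⟩
    exact exists_char ↥(algA Ω π)
  obtain ⟨lam⟩ := hchar
  -- the subgroup Γ₀
  let Γ₀ : Subgroup Γ :=
    { carrier := {g | ∀ b, SProp Ω b → nuF Ω lam g b = 1}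
      one_mem' := fun b _ => nu_one lam hΩ hpi hSg b
      mul_mem' := by
        intro g h hg hh b hb
        rw [nu_crossed lam hΩ hpi hSg g h b, hg (α h b) (SProp_alpha hΩ h hb), hh b hb, mul_one]
      inv_mem' := by
        intro g hg b' hb'
        have hb : SProp Ω (α g⁻¹ b') := SProp_alpha hΩ g⁻¹ hb'
        have h1 : nuF Ω lam (g⁻¹ * g) (α g⁻¹ b') = 1 := by
          rw [inv_mul_cancel]; exact nu_one lam hΩ hpi hSg _
        rw [nu_crossed lam hΩ hpi hSg g⁻¹ g (α g⁻¹ b'), alpha_apply_inv, hg _ hb,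
          mul_one] at h1
        exact h1 }
  -- Γ₀ has finite index
  have hF2fin : (Set.range (fun g : Γ => lam.comp (conjW hΩ hpi g))).Finite :=
    algHom_set_finite _
  have hνresT : (fun g : Γ => (fun b : {b : Sg // SProp Ω b} => nuF Ω lam g b.1))
      = (fun ℓ : ↥(algA Ω π) →ₐ[ℂ] ℂ => (fun b : {b : Sg // SProp Ω b} =>
          ℓ ⟨(π (inl b.1) : Matrix (Fin d) (Fin d) ℂ),
            Algebra.subset_adjoin ⟨b.1, b.2, rfl⟩⟩ * (fdef lam b.1)⁻¹))
        ∘ (fun g : Γ => lam.comp (conjW hΩ hpi g)) := by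
    funext g b
    show nuF Ω lam g b.1 = lam (conjW hΩ hpi g _) * (fdef lam b.1)⁻¹
    rw [conjW_apply lam hΩ hpi g b.2]
    rfl
  have hνfin : (Set.range (fun g : Γ =>
      (fun b : {b : Sg // SProp Ω b} => nuF Ω lam g b.1))).Finite := by
    rw [hνresT, Set.range_comp]
    exact hF2fin.image _
  haveI := hνfin.to_subtype
  have hcoset : ∀ g h : Γ, (∀ b, SProp Ω b → nuF Ω lam g b = nuF Ω lam h b) →
      g * h⁻¹ ∈ Γ₀ := by
    intro g h hgh b' hb'
    have hb : SProp Ω (α h⁻¹ b') := SProp_alpha hΩ h⁻¹ hb'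
    have h1 := nu_crossed lam hΩ hpi hSg (g * h⁻¹) h (α h⁻¹ b')
    rw [inv_mul_cancel_right, alpha_apply_inv, hgh _ hb] at h1
    have hne := nu_ne lam hΩ hpi hSg h (α h⁻¹ b')
    have h2 : nuF Ω lam (g * h⁻¹) b' * nuF Ω lam h (α h⁻¹ b')
        = 1 * nuF Ω lam h (α h⁻¹ b') := by rw [one_mul, ← h1]
    exact mul_right_cancel₀ hne h2
  have hquot : Finite (Γ ⧸ Γ₀) := by
    apply Finite.of_injective (f := fun q : Γ ⧸ Γ₀ =>
      (⟨(fun b : {b : Sg // SProp Ω b} => nuF Ω lam q.out⁻¹ b.1), Set.mem_range_self _⟩ :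
        Set.range (fun g : Γ => (fun b : {b : Sg // SProp Ω b} => nuF Ω lam g b.1))))
    intro q q' hqq
    have h2 := congrArg Subtype.val hqq
    have h3 : ∀ b, SProp Ω b → nuF Ω lam (q.out⁻¹) b = nuF Ω lam (q'.out⁻¹) b :=
      fun b hb => congrFun h2 ⟨b, hb⟩
    have h4 := hcoset _ _ h3
    rw [inv_inv] at h4
    rw [← QuotientGroup.out_eq' q, ← QuotientGroup.out_eq' q']
    exact QuotientGroup.eq.mpr h4
  haveI := hquot
  -- the circle-valued trivializing function
  have hC : ∀ a : Sg, fdef lam a ∈ Submonoid.unitSphere ℂ := by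
    intro a
    show fdef lam a ∈ Metric.sphere (0 : ℂ) 1
    rw [mem_sphere_zero_iff_norm]
    exact f_abs lam hΩ hpi hSg a
  refine ⟨S₀, Γ₀, Subgroup.finiteIndex_of_finite_quotient (H := S₀),
    Subgroup.finiteIndex_of_finite_quotient (H := Γ₀), ?_,
    fun g h => Ω (inr (g : Γ)) (inr (h : Γ)), ⟨?_, ?_, ?_⟩, ?_,
    fun x => (Ω (inl x.left) (inr x.right))⁻¹ * circOf (fdef lam x.left) (hC x.left), ?_, ?_⟩
  · -- invariance of S₀
    intro g _
    ext x
    simp only [Subgroup.mem_map]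
    constructor
    · rintro ⟨a, ha, rfl⟩
      exact SProp_alpha hΩ g ha
    · intro hx
      exact ⟨α g⁻¹ x, SProp_alpha hΩ g⁻¹ hx, alpha_apply_inv g x⟩
  · -- cocycle identity for ω₀
    intro g h k
    push_cast
    rw [map_mul, map_mul]
    exact hΩ.1 _ _ _
  · intro g
    show Ω (inr (g : Γ)) (inr ((1 : Γ₀) : Γ)) = 1
    rw [show ((1 : Γ₀) : Γ) = 1 from rfl, map_one, hΩ.2.1]
  · intro g
    show Ω (inr ((1 : Γ₀) : Γ)) (inr (g : Γ)) = 1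
    rw [show ((1 : Γ₀) : Γ) = 1 from rfl, map_one, hΩ.2.2]
  · -- ω₀ is of finite type
    exact ⟨d, hd, fun g : Γ₀ => π (inr (g : Γ)), fun g h => by
      have h2 := hpi (inr (g : Γ)) (inr (h : Γ))
      rw [← map_mul] at h2
      exact h2⟩
  · -- F 1 = 1
    apply Circle.coe_injective
    rw [Circle.coe_mul, Circle.coe_inv]
    show ((Ω (inl (1 : Sg)) (inr (1 : Γ))) : ℂ)⁻¹ * fdef lam (1 : Sg) = ((1 : Circle) : ℂ)
    rw [map_one, map_one, hΩ.2.1 1, f_one lam hΩ hpi]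
    simp
  · -- the main identity
    intro x y hx1 hx2 hy1 hy2
    apply Circle.coe_injective
    have hm := circ_c (master (hΩ := hΩ) x.left y.left x.right y.right)
    rw [inl_left_mul_inr_right, inl_left_mul_inr_right] at hm
    push_cast at hm
    have hcb : (cR Ω x.right y.left : ℂ) * fdef lam (α x.right y.left) *
        (fdef lam y.left)⁻¹ = 1 := hx2 y.left hy1
    have hsig := f_mul lam hΩ hpi hx1 (SProp_alpha hΩ x.right hy1)
    have hfa := f_ne lam hΩ hpi hSg x.left
    have hfb := f_ne lam hΩ hpi hSg y.left
    have hfab := f_ne lam hΩ hpi hSg (x.left * α x.right y.left)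
    have hfαb := f_ne lam hΩ hpi hSg (α x.right y.left)
    simp only [Circle.coe_mul, Circle.coe_inv, coe_circOf, SemidirectProduct.mul_left,
      SemidirectProduct.mul_right]
    field_simp at hcb
    field_simp
    linear_combination (fdef lam (x.left * α x.right y.left)) * hm
      - ((cR Ω x.right y.left : ℂ) * ((Ω (inr x.right) (inr y.right) : Circle) : ℂ) *
          ((Ω (inl (x.left * α x.right y.left)) (inr (x.right * y.right)) : Circle) : ℂ)) * hsig
      + (((Ω (inr x.right) (inr y.right) : Circle) : ℂ) *
          ((Ω (inl (x.left * α x.right y.left)) (inr (x.right * y.right)) : Circle) : ℂ) *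
            fdef lam x.left) * hcb
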